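/- A sequence n = (n(i))_{i≥0} of non-negative integers with finite support is the degree statistic of some finite rooted plane tree if and only if Σ_{i≥0} n(i) = 1 + Σ_{i≥0} i·n(i). -/

import Mathlib

inductive PTree : Type where
  | node : List PTree → PTree

namespace PTree

/-- The number of vertices of a rooted plane tree. -/
def size : PTree → ℕ
  | node ts => 1 + (ts.attach.map (fun x => size x.1)).sum
decreasing_by
  simp only [PTree.node.sizeOf_spec]
  have := List.sizeOf_lt_of_mem x.2
  omega

/-- `degCount i T` is the number of vertices of `T` with exactly `i` children. -/
def degCount (i : ℕ) : PTree → ℕ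
  | node ts => (if ts.length = i then 1 else 0) + (ts.attach.map (fun x => degCount i x.1)).sum
decreasing_by
  simp only [PTree.node.sizeOf_spec]
  have := List.sizeOf_lt_of_mem x.2
  omega

theorem degCount_node (i : ℕ) (ts : List PTree) :
    degCount i (node ts) = (if ts.length = i then 1 else 0) + (ts.map (degCount i)).sum := by
  rw [degCount]
  congr 1
  rw [List.attach_map_val]

lemma sum_map_sum {α : Type*} (s : Finset ℕ) (f : ℕ → α → ℕ) (ts : List α) :
    ∑ i ∈ s, (ts.map (f i)).sum = (ts.map (fun c => ∑ i ∈ s, f i c)).sum := by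
  induction ts with
  | nil => simp
  | cons a l ih => simp [Finset.sum_add_distrib, ih]

lemma list_sum_map_one_add {α : Type*} (g : α → ℕ) (ts : List α) :
    (ts.map (fun c => 1 + g c)).sum = ts.length + (ts.map g).sum := by
  induction ts with
  | nil => simp
  | cons a l ih => simp [ih]; omega

theorem sum_degCount (N : ℕ) : ∀ T : PTree, (∀ i, N ≤ i → degCount i T = 0) →
    ∑ i ∈ Finset.range N, degCount i T = 1 + ∑ i ∈ Finset.range N, i * degCount i T
  | node ts, h => by
    have hlen : ts.length < N := by
      by_contra hc
      have h0 := h ts.length (le_of_not_gt hc)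
      rw [degCount_node] at h0
      simp at h0
    have hch : ∀ c ∈ ts, ∀ i, N ≤ i → degCount i c = 0 := by
      intro c hc i hi
      have h0 := h i hi
      rw [degCount_node] at h0
      have hle : degCount i c ≤ (ts.map (degCount i)).sum :=
        List.single_le_sum (fun x _ => Nat.zero_le x) _ (List.mem_map_of_mem hc)
      omega
    have hrec : ∀ c ∈ ts,
        ∑ i ∈ Finset.range N, degCount i c = 1 + ∑ i ∈ Finset.range N, i * degCount i c :=
      fun c hc => sum_degCount N c (hch c hc)
    simp only [degCount_node, mul_add, mul_ite, mul_one, mul_zero, Finset.sum_add_distrib]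
    rw [Finset.sum_ite_eq, Finset.sum_ite_eq]
    simp only [Finset.mem_range, hlen, if_pos]
    have e1 : ∀ i, i * (ts.map (degCount i)).sum = (ts.map (fun c => i * degCount i c)).sum := by
      intro i
      rw [← List.sum_map_mul_left]
    simp only [e1]
    rw [sum_map_sum, sum_map_sum, List.map_congr_left hrec, list_sum_map_one_add]
termination_by T _ => sizeOf T
decreasing_by
  have := List.sizeOf_lt_of_mem hc
  simp only [PTree.node.sizeOf_spec]
  omega

def growAux (d : ℕ) : List PTree → Option (List PTree)
  | [] => none
  | node us :: rest =>
    if us.length = d then some (node (node [] :: us) :: rest)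
    else
      match growAux d us with
      | some us' => some (node us' :: rest)
      | none => (growAux d rest).map (fun r => node us :: r)
termination_by ts => sizeOf ts
decreasing_by
  all_goals simp only [PTree.node.sizeOf_spec, List.cons.sizeOf_spec]; omega

theorem growAux_length (d : ℕ) : ∀ ts ts', growAux d ts = some ts' → ts'.length = ts.length
  | [], _, h => by simp [growAux] at h
  | node us :: rest, ts', h => by
    rw [growAux] at h
    split at h
    · rw [← Option.some.inj h]; simp
    · split at h
      · rw [← Option.some.inj h]; simp
      · simp only [Option.map_eq_some_iff] at h
        obtain ⟨r, hr, rfl⟩ := h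
        have := growAux_length d rest r hr
        simp [this]
termination_by ts => sizeOf ts
decreasing_by
  all_goals simp only [PTree.node.sizeOf_spec, List.cons.sizeOf_spec]; omega

theorem growAux_none (d : ℕ) : ∀ ts, growAux d ts = none → (ts.map (degCount d)).sum = 0
  | [], _ => by simp
  | node us :: rest, h => by
    rw [growAux] at h
    split at h
    · exact absurd h (by simp)
    · rename_i hlen
      split at h
      · exact absurd h (by simp)
      · rename_i hus
        have h3 := growAux_none d us hus
        have h4 := growAux_none d rest (Option.map_eq_none_iff.mp h)
        simp [degCount_node, h3, h4, hlen]
termination_by ts => sizeOf ts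
decreasing_by
  all_goals simp only [PTree.node.sizeOf_spec, List.cons.sizeOf_spec]; omega

theorem growAux_spec (d : ℕ) : ∀ ts ts', growAux d ts = some ts' → ∀ j,
    (ts'.map (degCount j)).sum + (if j = d then 1 else 0) =
      (ts.map (degCount j)).sum + (if j = 0 then 1 else 0) + (if j = d + 1 then 1 else 0)
  | [], _, h => by simp [growAux] at h
  | node us :: rest, ts', h => by
    rw [growAux] at h
    split at h
    · rename_i hlen
      intro j
      obtain rfl : node (node [] :: us) :: rest = ts' := Option.some.inj h
      simp only [List.map_cons, List.sum_cons, degCount_node, List.length_cons, hlen,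
        List.length_nil, List.map_nil, List.sum_nil]
      split_ifs <;> omega
    · rename_i hlen
      split at h
      · rename_i us' hus
        obtain rfl : node us' :: rest = ts' := Option.some.inj h
        intro j
        have hl := growAux_length d us us' hus
        have hs := growAux_spec d us us' hus j
        simp only [List.map_cons, List.sum_cons, degCount_node, hl]
        split_ifs at hs ⊢ <;> omega
      · rename_i hus
        simp only [Option.map_eq_some_iff] at h
        obtain ⟨r, hr, rfl⟩ := h
        intro j
        have hs := growAux_spec d rest r hr j
        simp only [List.map_cons, List.sum_cons]
        omega
termination_by ts => sizeOf ts
decreasing_by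
  all_goals simp only [PTree.node.sizeOf_spec, List.cons.sizeOf_spec]; omega

theorem exists_tree (N : ℕ) : ∀ E (n : ℕ → ℕ), (∀ i, N ≤ i → n i = 0) →
    (∑ i ∈ Finset.range N, i * n i = E) → (∑ i ∈ Finset.range N, n i = 1 + E) →
    ∃ T : PTree, ∀ i, degCount i T = n i := by
  intro E
  induction E with
  | zero =>
    intro n hN h2 h3
    have hz : ∀ i ∈ Finset.range N, i * n i = 0 := Finset.sum_eq_zero_iff.mp h2
    have hpos : ∀ i, 1 ≤ i → n i = 0 := by
      intro i hi
      rcases lt_or_ge i N with hiN | hiN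
      · have h0 := hz i (Finset.mem_range.mpr hiN)
        rcases Nat.mul_eq_zero.mp h0 with h | h
        · omega
        · exact h
      · exact hN i hiN
    have hN0 : 0 < N := by
      rcases Nat.eq_zero_or_pos N with rfl | h
      · simp at h3
      · exact h
    have hn0 : n 0 = 1 := by
      have hs : ∑ i ∈ Finset.range N, n i = n 0 := by
        apply Finset.sum_eq_single 0
        · intro b _ hb0
          exact hpos b (by omega)
        · intro h0
          exact absurd (Finset.mem_range.mpr hN0) h0
      omega
    refine ⟨node [], fun i => ?_⟩
    rw [degCount_node]
    simp only [List.length_nil, List.map_nil, List.sum_nil, add_zero]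
    rcases Nat.eq_zero_or_pos i with rfl | hi
    · simp [hn0]
    · rw [if_neg (by omega), hpos i hi]
  | succ E ih =>
    intro n hN h2 h3
    have hex : ∃ k ∈ Finset.range N, k * n k ≠ 0 := by
      by_contra hc
      push_neg at hc
      rw [Finset.sum_eq_zero hc] at h2
      omega
    obtain ⟨k, hkN', hk⟩ := hex
    have hkN : k < N := Finset.mem_range.mp hkN'
    have hk1 : 1 ≤ k := by
      rcases Nat.eq_zero_or_pos k with rfl | h
      · simp at hk
      · exact h
    have hnk : 1 ≤ n k := by
      rcases Nat.eq_zero_or_pos (n k) with h | h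
      · simp [h] at hk
      · exact h
    have h0N : (0 : ℕ) ∈ Finset.range N := Finset.mem_range.mpr (by omega)
    have e1 : ∑ i ∈ Finset.range N, n i = n 0 + ∑ i ∈ (Finset.range N).erase 0, n i :=
      (Finset.add_sum_erase _ _ h0N).symm
    have e2 : ∑ i ∈ (Finset.range N).erase 0, n i ≤ ∑ i ∈ (Finset.range N).erase 0, i * n i :=
      Finset.sum_le_sum (fun i hi =>
        Nat.le_mul_of_pos_left _ (Nat.pos_of_ne_zero (Finset.ne_of_mem_erase hi)))
    have e3 : ∑ i ∈ (Finset.range N).erase 0, i * n i ≤ ∑ i ∈ Finset.range N, i * n i :=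
      Finset.sum_le_sum_of_subset (Finset.erase_subset _ _)
    have hn0 : 1 ≤ n 0 := by omega
    set m : ℕ → ℕ := fun j =>
      (n j + (if j = k - 1 then 1 else 0)) - (if j = k then 1 else 0) - (if j = 0 then 1 else 0)
      with hm
    have hmj : ∀ j, m j + (if j = k then 1 else 0) + (if j = 0 then 1 else 0)
        = n j + (if j = k - 1 then 1 else 0) := by
      intro j
      by_cases hjk : j = k
      · subst hjk
        simp only [hm]
        split_ifs <;> omega
      · by_cases hj0 : j = 0
        · subst hj0
          simp only [hm]
          split_ifs <;> omega
        · simp only [hm]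
          split_ifs <;> omega
    have hmN : ∀ i, N ≤ i → m i = 0 := by
      intro i hi
      have := hN i hi
      simp only [hm]
      split_ifs <;> omega
    have hsum1 : ∑ i ∈ Finset.range N, m i = 1 + E := by
      have hs : ∑ i ∈ Finset.range N,
            (m i + (if i = k then 1 else 0) + (if i = 0 then 1 else 0))
          = ∑ i ∈ Finset.range N, (n i + (if i = k - 1 then 1 else 0)) :=
        Finset.sum_congr rfl (fun i _ => hmj i)
      rw [Finset.sum_add_distrib, Finset.sum_add_distrib, Finset.sum_add_distrib,
        Finset.sum_ite_eq', Finset.sum_ite_eq', Finset.sum_ite_eq'] at hs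
      rw [if_pos hkN', if_pos h0N, if_pos (Finset.mem_range.mpr (by omega : k - 1 < N))] at hs
      omega
    have hmw : ∀ j, j * m j + (if j = k then k else 0)
        = j * n j + (if j = k - 1 then k - 1 else 0) := by
      intro j
      by_cases hjk : j = k
      · subst hjk
        have hmk : m j = n j - 1 := by
          simp only [hm]
          split_ifs <;> omega
        rw [hmk, if_pos rfl, if_neg (by omega)]
        obtain ⟨t, ht⟩ : ∃ t, n j = t + 1 := ⟨n j - 1, by omega⟩
        rw [ht]
        simp [Nat.mul_succ]
      · by_cases hjk1 : j = k - 1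
        · by_cases hk1' : k = 1
          · rw [hjk1, hk1']
            norm_num
          · have hmj1 : m j = n j + 1 := by
              simp only [hm]
              split_ifs <;> omega
            rw [hmj1, if_neg hjk, if_pos hjk1, hjk1, Nat.mul_succ]
            omega
        · by_cases hj0 : j = 0
          · subst hj0
            simp [if_neg hjk, if_neg hjk1]
          · have hmje : m j = n j := by
              simp only [hm]
              split_ifs <;> omega
            rw [hmje, if_neg hjk, if_neg hjk1]
    have hsum2 : ∑ i ∈ Finset.range N, i * m i = E := by
      have hs : ∑ i ∈ Finset.range N, (i * m i + (if i = k then k else 0))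
          = ∑ i ∈ Finset.range N, (i * n i + (if i = k - 1 then k - 1 else 0)) :=
        Finset.sum_congr rfl (fun i _ => hmw i)
      rw [Finset.sum_add_distrib, Finset.sum_add_distrib,
        Finset.sum_ite_eq', Finset.sum_ite_eq'] at hs
      rw [if_pos hkN', if_pos (Finset.mem_range.mpr (by omega : k - 1 < N))] at hs
      omega
    obtain ⟨T', hT'⟩ := ih m hmN hsum2 (by omega)
    have hmk1 : 1 ≤ m (k - 1) := by
      by_cases hk1' : k = 1
      · subst hk1'
        have h5 := hmj 0
        simp at h5
        rw [show (1:ℕ) - 1 = 0 from rfl]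
        omega
      · have h5 := hmj (k - 1)
        rw [if_neg (by omega), if_neg (by omega), if_pos rfl] at h5
        omega
    have hne : growAux (k - 1) [T'] ≠ none := by
      intro hc
      have h6 := growAux_none (k - 1) [T'] hc
      simp only [List.map_cons, List.map_nil, List.sum_cons, List.sum_nil, add_zero] at h6
      rw [hT' (k - 1)] at h6
      omega
    obtain ⟨ts', hts'⟩ := Option.ne_none_iff_exists'.mp hne
    obtain ⟨T, rfl⟩ := List.length_eq_one_iff.mp (by simpa using growAux_length _ _ _ hts')
    refine ⟨T, fun j => ?_⟩
    have hs := growAux_spec (k - 1) [T'] [T] hts' j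
    simp only [List.map_cons, List.map_nil, List.sum_cons, List.sum_nil, add_zero] at hs
    rw [hT' j] at hs
    have hk' : k - 1 + 1 = k := by omega
    rw [hk'] at hs
    have h7 := hmj j
    split_ifs at hs h7 <;> omega

end PTree

/-- A finitely supported sequence `n` of non-negative integers is the degree statistic of
some rooted plane tree iff `∑_i n(i) = 1 + ∑_i i·n(i)`. -/
theorem stmt_1 (n : ℕ → ℕ) (hfin : {i | n i ≠ 0}.Finite) :
    (∃ T : PTree, ∀ i, T.degCount i = n i) ↔
      ∑' i : ℕ, n i = 1 + ∑' i : ℕ, i * n i := by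
  obtain ⟨B, hB⟩ := hfin.bddAbove
  set N := B + 1 with hNdef
  have hNn : ∀ i, N ≤ i → n i = 0 := by
    intro i hi
    by_contra hc
    have := hB (show i ∈ {i | n i ≠ 0} from hc)
    omega
  have t1 : ∑' i, n i = ∑ i ∈ Finset.range N, n i :=
    tsum_eq_sum (fun b hb => hNn b (by simpa using hb))
  have t2 : ∑' i, i * n i = ∑ i ∈ Finset.range N, i * n i :=
    tsum_eq_sum (fun b hb => by rw [hNn b (by simpa using hb), mul_zero])
  rw [t1, t2]
  constructor
  · rintro ⟨T, hT⟩
    have hdeg : ∀ i, N ≤ i → PTree.degCount i T = 0 := by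
      intro i hi
      rw [hT i]
      exact hNn i hi
    have hsum := PTree.sum_degCount N T hdeg
    have c1 : ∑ i ∈ Finset.range N, n i = ∑ i ∈ Finset.range N, PTree.degCount i T :=
      Finset.sum_congr rfl (fun i _ => (hT i).symm)
    have c2 : ∑ i ∈ Finset.range N, i * n i = ∑ i ∈ Finset.range N, i * PTree.degCount i T :=
      Finset.sum_congr rfl (fun i _ => by rw [hT i])
    rw [c1, c2]
    exact hsum
  · intro h
    exact PTree.exists_tree N (∑ i ∈ Finset.range N, i * n i) n hNn rfl h
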